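/- Theorem (deterministic consistency bound for the SDP): suppose all entries of K and of K̃ lie in [0,1], let X̂ be SDP-1-feasible with ⟨K, X̂⟩ ≥ ⟨K, X₀⟩, set ε := max_{i,j ∈ I} |K_{ij} − K̃_{ij}|, and suppose γ_min > 2ε. Then ‖X₀ − X̂‖₁ ≤ 8mn / (r·(γ_min − 2ε)). In particular, if m = 0 and γ_min > 2ε, then X̂ = X₀. -/

import Mathlib

open Matrix

/-- The entrywise ℓ¹ norm of a matrix: `‖M‖₁ = Σ_{i,j} |M_{ij}|`. -/
def l1Norm {n : ℕ} (M : Matrix (Fin n) (Fin n) ℝ) : ℝ := ∑ i, ∑ j, |M i j|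

/-- The trace inner product of two matrices: `⟨A, B⟩ = trace(Aᵀ B)`. -/
def mInner {n : ℕ} (A B : Matrix (Fin n) (Fin n) ℝ) : ℝ := Matrix.trace (Aᵀ * B)

/-- A matrix `X ∈ ℝ^{n×n}` is SDP-1-feasible if it is symmetric positive semidefinite,
entrywise nonnegative, has all row sums equal to `n/r`, and has unit diagonal. -/
def SDPFeasible (n r : ℕ) (X : Matrix (Fin n) (Fin n) ℝ) : Prop :=
  X.PosSemidef ∧ (∀ i j, 0 ≤ X i j) ∧ (∀ i, ∑ j, X i j = (n : ℝ) / r) ∧ (∀ i, X i i = 1)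

/-- The population kernel matrix: `K̃_{ij} = f(d_{kℓ}² + σ_k² + σ_ℓ²)` for `i ∈ C̃_k`,
`j ∈ C̃_ℓ`, `i ≠ j`, and `K̃_{ii} = f(0)`, where `d_{kℓ}² = ‖μ_k − μ_ℓ‖²`. -/
noncomputable def popKernel (n r p : ℕ) (z : Fin n → Fin r) (f : ℝ → ℝ)
    (μ : Fin r → Fin p → ℝ) (σ : Fin r → ℝ) : Matrix (Fin n) (Fin n) ℝ :=
  Matrix.of fun i j => if i = j then f 0 else
    f ((∑ t, (μ (z i) t - μ (z j) t) ^ 2) + (σ (z i)) ^ 2 + (σ (z j)) ^ 2)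

/-- `γ_min = min_{k ≠ ℓ} [f(2σ_k²) − f(d_{kℓ}² + σ_k² + σ_ℓ²)]`. -/
noncomputable def gammaMin (r p : ℕ) (f : ℝ → ℝ) (μ : Fin r → Fin p → ℝ)
    (σ : Fin r → ℝ) : ℝ :=
  ⨅ q : {q : Fin r × Fin r // q.1 ≠ q.2},
    (f (2 * (σ q.1.1) ^ 2) -
      f ((∑ t, (μ q.1.1 t - μ q.1.2 t) ^ 2) + (σ q.1.1) ^ 2 + (σ q.1.2) ^ 2))

/-- deterministic consistency bound for the SDP: if all entries of `K` and of
`K̃` lie in `[0,1]`, `X̂` is SDP-1-feasible with `⟨K, X̂⟩ ≥ ⟨K, X₀⟩`,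
`ε ≥ max_{i,j ∈ I} |K_{ij} − K̃_{ij}|` and `γ_min > 2ε`, then
`‖X₀ − X̂‖₁ ≤ 8mn / (r·(γ_min − 2ε))`; in particular, if `m = 0` then `X̂ = X₀`. -/
theorem stmt_7 (n r p m : ℕ) (hr : 2 ≤ r) (hdvd : r ∣ n)
    (z : Fin n → Fin r)
    (hsize : ∀ k : Fin r, (Finset.univ.filter fun i => z i = k).card = n / r)
    (Z : Matrix (Fin n) (Fin r) ℝ)
    (hZ : Z = Matrix.of (fun i k => if z i = k then (1 : ℝ) else 0))
    (X₀ : Matrix (Fin n) (Fin n) ℝ) (hX₀ : X₀ = Z * Zᵀ)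
    (I : Finset (Fin n)) (hm : Iᶜ.card = m)
    (f : ℝ → ℝ) (μ : Fin r → Fin p → ℝ) (σ : Fin r → ℝ)
    (K : Matrix (Fin n) (Fin n) ℝ) (hK : K.IsSymm)
    (hK01 : ∀ i j, K i j ∈ Set.Icc (0 : ℝ) 1)
    (hKt01 : ∀ i j, popKernel n r p z f μ σ i j ∈ Set.Icc (0 : ℝ) 1)
    (ε : ℝ) (hε0 : 0 ≤ ε)
    (hε : ∀ i ∈ I, ∀ j ∈ I, |K i j - popKernel n r p z f μ σ i j| ≤ ε)
    (hγε : 2 * ε < gammaMin r p f μ σ)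
    (Xh : Matrix (Fin n) (Fin n) ℝ) (hfeas : SDPFeasible n r Xh)
    (hopt : mInner K X₀ ≤ mInner K Xh) :
    l1Norm (X₀ - Xh) ≤ 8 * m * n / (r * (gammaMin r p f μ σ - 2 * ε)) ∧
      (m = 0 → Xh = X₀) := by
  obtain ⟨hpsd, hpos, hrow, hdiag⟩ := hfeas
  set Kt := popKernel n r p z f μ σ with hKtdef
  set γ := gammaMin r p f μ σ with hγdef
  have hr0 : (0:ℝ) < r := by positivity
  have hγ2 : 0 < γ - 2*ε := by linarith
  -- entries of X₀
  have hX0e : ∀ i j, X₀ i j = if z i = z j then (1:ℝ) else 0 := by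
    intro i j; rw [hX₀]; simp [hZ, Matrix.mul_apply, ite_and, Finset.sum_ite_eq]
  have hX0d : ∀ i, X₀ i i = 1 := fun i => by simp [hX0e]
  have hX0pos : ∀ i j, 0 ≤ X₀ i j := fun i j => by rw [hX0e]; split <;> norm_num
  have hX0sym : ∀ i j, X₀ j i = X₀ i j := by
    intro i j; rw [hX0e, hX0e]
    by_cases h : z i = z j
    · simp [h]
    · rw [if_neg h, if_neg (fun hh => h hh.symm)]
  have hXhsym : ∀ i j, Xh j i = Xh i j := by
    intro i j; have := hpsd.1.apply i j; simpa using this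
  have hXh1 : ∀ i j, Xh i j ≤ 1 := by
    intro i j
    rcases eq_or_ne i j with rfl | hij
    · exact le_of_eq (hdiag i)
    · have hq := hpsd.dotProduct_mulVec_nonneg (Pi.single i 1 - Pi.single j 1)
      have hval : star (Pi.single i 1 - Pi.single j 1) ⬝ᵥ Xh *ᵥ (Pi.single i 1 - Pi.single j 1)
          = Xh i i - Xh i j - Xh j i + Xh j j := by
        simp [dotProduct, mulVec, Pi.single_apply, sub_mul, mul_sub, Finset.sum_sub_distrib,
          hij, hij.symm]
        ring
      rw [hval, hdiag, hdiag] at hq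
      have := hXhsym i j
      linarith
  have hDsym : ∀ i j, X₀ j i - Xh j i = X₀ i j - Xh i j := by
    intro i j; rw [hX0sym, hXhsym]
  -- row sums of X₀
  have hrow0 : ∀ i, ∑ j, X₀ i j = (n:ℝ)/r := by
    intro i
    have h1 : ∑ j, X₀ i j = ((Finset.univ.filter fun j => z j = z i).card : ℝ) := by
      rw [Finset.card_filter]
      push_cast
      refine Finset.sum_congr rfl fun j _ => ?_
      rw [hX0e]
      by_cases h : z j = z i
      · simp [h]
      · rw [if_neg (fun hh => h hh.symm), if_neg h]
    rw [h1, hsize (z i), Nat.cast_div hdvd (by positivity)]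
  have hDrow : ∀ i, ∑ j, (X₀ i j - Xh i j) = 0 := by
    intro i; rw [Finset.sum_sub_distrib, hrow0, hrow]; ring
  -- gammaMin bound
  have hγle : ∀ i j : Fin n, ¬ z j = z i →
      γ ≤ f (2 * (σ (z i)) ^ 2) -
        f ((∑ t, (μ (z i) t - μ (z j) t) ^ 2) + (σ (z i)) ^ 2 + (σ (z j)) ^ 2) := by
    intro i j h
    exact ciInf_le (Set.Finite.bddBelow (Set.finite_range _))
      (⟨(z i, z j), fun hh => h hh.symm⟩ : {q : Fin r × Fin r // q.1 ≠ q.2})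
  have hKtcross : ∀ i j : Fin n, ¬ z j = z i →
      Kt i j = f ((∑ t, (μ (z i) t - μ (z j) t) ^ 2) + (σ (z i)) ^ 2 + (σ (z j)) ^ 2) := by
    intro i j h
    have hij : i ≠ j := fun hh => h (by rw [hh])
    rw [hKtdef]
    unfold popKernel
    rw [Matrix.of_apply, if_neg hij]
  -- same-cluster minus cross sums
  have hsame_cross : ∀ i,
      ∑ j ∈ Finset.univ.filter (fun j => z j = z i), (X₀ i j - Xh i j)
        = ∑ j ∈ Finset.univ.filter (fun j => ¬ z j = z i), Xh i j := by
    intro i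
    have h0 := hDrow i
    rw [← Finset.sum_filter_add_sum_filter_not Finset.univ (fun j => z j = z i)] at h0
    have hc : ∑ j ∈ Finset.univ.filter (fun j => ¬ z j = z i), (X₀ i j - Xh i j)
        = ∑ j ∈ Finset.univ.filter (fun j => ¬ z j = z i), (- Xh i j) := by
      refine Finset.sum_congr rfl fun j hj => ?_
      simp only [Finset.mem_filter] at hj
      have : X₀ i j = 0 := by rw [hX0e, if_neg (fun hh => hj.2 hh.symm)]
      rw [this]; ring
    rw [hc, Finset.sum_neg_distrib] at h0
    linarith
  -- per-row key lower bound
  have hrowkey : ∀ i, γ * (∑ j ∈ Finset.univ.filter (fun j => ¬ z j = z i), Xh i j)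
      ≤ ∑ j, Kt i j * (X₀ i j - Xh i j) := by
    intro i
    have hsplit := Finset.sum_filter_add_sum_filter_not Finset.univ (fun j => z j = z i)
      (fun j => Kt i j * (X₀ i j - Xh i j))
    have hsame : ∑ j ∈ Finset.univ.filter (fun j => z j = z i), Kt i j * (X₀ i j - Xh i j)
        = f (2 * (σ (z i))^2) * ∑ j ∈ Finset.univ.filter (fun j => z j = z i), (X₀ i j - Xh i j) := by
      rw [Finset.mul_sum]
      refine Finset.sum_congr rfl fun j hj => ?_
      simp only [Finset.mem_filter] at hj
      rcases eq_or_ne j i with rfl | hne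
      · have h0 : X₀ j j - Xh j j = 0 := by rw [hX0d, hdiag]; ring
        rw [h0, mul_zero, mul_zero]
      · have hKtij : Kt i j = f (2 * (σ (z i))^2) := by
          rw [hKtdef]
          unfold popKernel
          rw [Matrix.of_apply, if_neg (Ne.symm hne)]
          congr 1
          rw [hj.2]
          simp
          ring
        rw [hKtij]
    have hcrossD : ∑ j ∈ Finset.univ.filter (fun j => ¬ z j = z i), Kt i j * (X₀ i j - Xh i j)
        = ∑ j ∈ Finset.univ.filter (fun j => ¬ z j = z i), Kt i j * (- Xh i j) := by
      refine Finset.sum_congr rfl fun j hj => ?_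
      simp only [Finset.mem_filter] at hj
      have : X₀ i j = 0 := by rw [hX0e, if_neg (fun hh => hj.2 hh.symm)]
      rw [this]; ring_nf
    calc γ * (∑ j ∈ Finset.univ.filter (fun j => ¬ z j = z i), Xh i j)
        = ∑ j ∈ Finset.univ.filter (fun j => ¬ z j = z i), γ * Xh i j := by
          rw [Finset.mul_sum]
      _ ≤ ∑ j ∈ Finset.univ.filter (fun j => ¬ z j = z i),
            (f (2 * (σ (z i))^2) - Kt i j) * Xh i j := by
          refine Finset.sum_le_sum fun j hj => ?_
          simp only [Finset.mem_filter] at hj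
          have hco := hγle i j hj.2
          rw [← hKtcross i j hj.2] at hco
          exact mul_le_mul_of_nonneg_right hco (hpos i j)
      _ = f (2 * (σ (z i))^2) * (∑ j ∈ Finset.univ.filter (fun j => ¬ z j = z i), Xh i j)
            + ∑ j ∈ Finset.univ.filter (fun j => ¬ z j = z i), Kt i j * (- Xh i j) := by
          rw [Finset.mul_sum, ← Finset.sum_add_distrib]
          exact Finset.sum_congr rfl fun j _ => by ring
      _ = ∑ j ∈ Finset.univ.filter (fun j => z j = z i), Kt i j * (X₀ i j - Xh i j)
            + ∑ j ∈ Finset.univ.filter (fun j => ¬ z j = z i), Kt i j * (X₀ i j - Xh i j) := by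
          rw [← hsame_cross i, hsame, hcrossD]
      _ = ∑ j, Kt i j * (X₀ i j - Xh i j) := hsplit
  -- the row abs-sum identity
  have hrowabs : ∀ i, ∑ j, |X₀ i j - Xh i j|
      = 2 * ∑ j ∈ Finset.univ.filter (fun j => ¬ z j = z i), Xh i j := by
    intro i
    rw [← Finset.sum_filter_add_sum_filter_not Finset.univ (fun j => z j = z i)
      (fun j => |X₀ i j - Xh i j|)]
    have h1 : ∑ j ∈ Finset.univ.filter (fun j => z j = z i), |X₀ i j - Xh i j|
        = ∑ j ∈ Finset.univ.filter (fun j => z j = z i), (X₀ i j - Xh i j) := by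
      refine Finset.sum_congr rfl fun j hj => ?_
      simp only [Finset.mem_filter] at hj
      have hx : X₀ i j = 1 := by rw [hX0e, if_pos hj.2.symm]
      rw [abs_of_nonneg]; rw [hx]; linarith [hXh1 i j]
    have h2 : ∑ j ∈ Finset.univ.filter (fun j => ¬ z j = z i), |X₀ i j - Xh i j|
        = ∑ j ∈ Finset.univ.filter (fun j => ¬ z j = z i), Xh i j := by
      refine Finset.sum_congr rfl fun j hj => ?_
      simp only [Finset.mem_filter] at hj
      have hx : X₀ i j = 0 := by rw [hX0e, if_neg (fun hh => hj.2 hh.symm)]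
      rw [hx, zero_sub, abs_neg, abs_of_nonneg (hpos i j)]
    rw [h1, h2, hsame_cross i]; ring
  -- abs row-sum bound
  have hrowabs_le : ∀ i, ∑ j, |X₀ i j - Xh i j| ≤ 2 * n / r := by
    intro i
    have h1 : ∑ j, |X₀ i j - Xh i j| ≤ ∑ j, (X₀ i j + Xh i j) := by
      refine Finset.sum_le_sum fun j _ => ?_
      calc |X₀ i j - Xh i j| ≤ |X₀ i j| + |Xh i j| := abs_sub _ _
        _ = X₀ i j + Xh i j := by
            rw [abs_of_nonneg (hX0pos i j), abs_of_nonneg (hpos i j)]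
    rw [Finset.sum_add_distrib, hrow0, hrow] at h1
    calc ∑ j, |X₀ i j - Xh i j| ≤ (n:ℝ)/r + (n:ℝ)/r := h1
      _ = 2 * n / r := by ring
  -- inner products as sums
  have hinner : ∀ A B : Matrix (Fin n) (Fin n) ℝ, mInner A B = ∑ i, ∑ j, A i j * B i j := by
    intro A B
    unfold mInner
    rw [Matrix.trace]
    simp only [Matrix.diag, Matrix.mul_apply, Matrix.transpose_apply]
    exact Finset.sum_comm
  set T := ∑ i, ∑ j ∈ Finset.univ.filter (fun j => ¬ z j = z i), Xh i j with hTdef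
  have hl1 : l1Norm (X₀ - Xh) = 2 * T := by
    unfold l1Norm
    rw [hTdef, Finset.mul_sum]
    refine Finset.sum_congr rfl fun i _ => ?_
    rw [← hrowabs i]
    exact Finset.sum_congr rfl fun j _ => by rw [Matrix.sub_apply]
  -- lower bound on ⟨Kt, D⟩
  have hlow : γ * T ≤ ∑ i, ∑ j, Kt i j * (X₀ i j - Xh i j) := by
    rw [hTdef, Finset.mul_sum]
    exact Finset.sum_le_sum fun i _ => hrowkey i
  -- ⟨K, D⟩ ≤ 0
  have hKD : ∑ i, ∑ j, K i j * (X₀ i j - Xh i j) ≤ 0 := by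
    have h1 := hinner K X₀
    have h2 := hinner K Xh
    have h3 : ∑ i, ∑ j, K i j * (X₀ i j - Xh i j)
        = (∑ i, ∑ j, K i j * X₀ i j) - ∑ i, ∑ j, K i j * Xh i j := by
      rw [← Finset.sum_sub_distrib]
      refine Finset.sum_congr rfl fun i _ => ?_
      rw [← Finset.sum_sub_distrib]
      exact Finset.sum_congr rfl fun j _ => by ring
    rw [h3, ← h1, ← h2]
    linarith
  -- upper bound on ⟨Kt, D⟩
  have hout : ∑ i, ∑ j, Kt i j * (X₀ i j - Xh i j)
      ≤ ε * (2 * T) + (∑ i, ∑ j, (if i ∈ I then (0:ℝ) else 1) * |X₀ i j - Xh i j|)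
        + (∑ i, ∑ j, (if j ∈ I then (0:ℝ) else 1) * |X₀ i j - Xh i j|) := by
    have hterm : ∀ i j, Kt i j * (X₀ i j - Xh i j)
        ≤ K i j * (X₀ i j - Xh i j)
          + (ε + (if i ∈ I then (0:ℝ) else 1) + (if j ∈ I then (0:ℝ) else 1))
            * |X₀ i j - Xh i j| := by
      intro i j
      have habs : |Kt i j - K i j| ≤ ε + (if i ∈ I then (0:ℝ) else 1)
          + (if j ∈ I then (0:ℝ) else 1) := by
        by_cases hi : i ∈ I
        · by_cases hj : j ∈ I
          · rw [if_pos hi, if_pos hj]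
            have := hε i hi j hj
            rw [abs_sub_comm] at this
            linarith
          · rw [if_pos hi, if_neg hj]
            have h1 := hK01 i j
            have h2 := hKt01 i j
            rw [abs_le]
            constructor <;> [skip; skip] <;>
              · simp only [Set.mem_Icc] at h1 h2; linarith
        · rw [if_neg hi]
          have h1 := hK01 i j
          have h2 := hKt01 i j
          have hind : (0:ℝ) ≤ if j ∈ I then (0:ℝ) else 1 := by split <;> norm_num
          rw [abs_le]
          constructor <;>
            · simp only [Set.mem_Icc] at h1 h2; linarith
      have h1 : (Kt i j - K i j) * (X₀ i j - Xh i j) ≤ |Kt i j - K i j| * |X₀ i j - Xh i j| := by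
        calc (Kt i j - K i j) * (X₀ i j - Xh i j) ≤ |(Kt i j - K i j) * (X₀ i j - Xh i j)| :=
              le_abs_self _
          _ = |Kt i j - K i j| * |X₀ i j - Xh i j| := abs_mul _ _
      have h2 : |Kt i j - K i j| * |X₀ i j - Xh i j|
          ≤ (ε + (if i ∈ I then (0:ℝ) else 1) + (if j ∈ I then (0:ℝ) else 1))
            * |X₀ i j - Xh i j| :=
        mul_le_mul_of_nonneg_right habs (abs_nonneg _)
      nlinarith [h1, h2]
    have hsum : ∑ i, ∑ j, Kt i j * (X₀ i j - Xh i j)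
        ≤ ∑ i, ∑ j, (K i j * (X₀ i j - Xh i j)
          + (ε + (if i ∈ I then (0:ℝ) else 1) + (if j ∈ I then (0:ℝ) else 1))
            * |X₀ i j - Xh i j|) :=
      Finset.sum_le_sum fun i _ => Finset.sum_le_sum fun j _ => hterm i j
    have hexp : ∑ i, ∑ j, (K i j * (X₀ i j - Xh i j)
          + (ε + (if i ∈ I then (0:ℝ) else 1) + (if j ∈ I then (0:ℝ) else 1))
            * |X₀ i j - Xh i j|)
        = (∑ i, ∑ j, K i j * (X₀ i j - Xh i j))
          + ε * (∑ i, ∑ j, |X₀ i j - Xh i j|)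
          + (∑ i, ∑ j, (if i ∈ I then (0:ℝ) else 1) * |X₀ i j - Xh i j|)
          + (∑ i, ∑ j, (if j ∈ I then (0:ℝ) else 1) * |X₀ i j - Xh i j|) := by
      rw [Finset.mul_sum, ← Finset.sum_add_distrib, ← Finset.sum_add_distrib,
        ← Finset.sum_add_distrib]
      refine Finset.sum_congr rfl fun i _ => ?_
      rw [Finset.mul_sum, ← Finset.sum_add_distrib, ← Finset.sum_add_distrib,
        ← Finset.sum_add_distrib]
      exact Finset.sum_congr rfl fun j _ => by ring
    have habsl1 : ∑ i, ∑ j, |X₀ i j - Xh i j| = 2 * T := by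
      rw [← hl1]
      unfold l1Norm
      exact Finset.sum_congr rfl fun i _ => Finset.sum_congr rfl fun j _ => by
        rw [Matrix.sub_apply]
    rw [hexp, habsl1] at hsum
    linarith
  -- outlier sums bounds
  have hout1 : ∑ i, ∑ j, (if i ∈ I then (0:ℝ) else 1) * |X₀ i j - Xh i j|
      ≤ m * (2 * n / r) := by
    have h1 : ∀ i : Fin n, ∑ j, (if i ∈ I then (0:ℝ) else 1) * |X₀ i j - Xh i j|
        ≤ (if i ∈ I then (0:ℝ) else 1) * (2 * n / r) := by
      intro i
      rw [← Finset.mul_sum]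
      by_cases hi : i ∈ I
      · simp [hi]
      · rw [if_neg hi, one_mul, one_mul]
        exact hrowabs_le i
    calc ∑ i, ∑ j, (if i ∈ I then (0:ℝ) else 1) * |X₀ i j - Xh i j|
        ≤ ∑ i, (if i ∈ I then (0:ℝ) else 1) * (2 * n / r) := Finset.sum_le_sum fun i _ => h1 i
      _ = (Iᶜ.card : ℝ) * (2 * n / r) := by
          rw [← Finset.sum_mul]
          congr 1
          have hfe : Finset.univ.filter (fun i : Fin n => i ∈ Iᶜ) = Iᶜ := by
            ext x; simp
          rw [← hfe, Finset.card_filter]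
          push_cast
          refine Finset.sum_congr rfl fun i _ => ?_
          by_cases hi : i ∈ I <;> simp [hi]
      _ = m * (2 * n / r) := by rw [hm]
  have hout2 : ∑ i, ∑ j, (if j ∈ I then (0:ℝ) else 1) * |X₀ i j - Xh i j|
      ≤ m * (2 * n / r) := by
    rw [Finset.sum_comm]
    have h1 : ∀ j : Fin n, ∑ i, (if j ∈ I then (0:ℝ) else 1) * |X₀ i j - Xh i j|
        ≤ (if j ∈ I then (0:ℝ) else 1) * (2 * n / r) := by
      intro j
      rw [← Finset.mul_sum]
      by_cases hj : j ∈ I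
      · simp [hj]
      · rw [if_neg hj, one_mul, one_mul]
        have hcol : ∑ i, |X₀ i j - Xh i j| = ∑ i, |X₀ j i - Xh j i| :=
          Finset.sum_congr rfl fun i _ => by rw [hDsym]
        rw [hcol]
        exact hrowabs_le j
    calc ∑ j, ∑ i, (if j ∈ I then (0:ℝ) else 1) * |X₀ i j - Xh i j|
        ≤ ∑ j, (if j ∈ I then (0:ℝ) else 1) * (2 * n / r) := Finset.sum_le_sum fun j _ => h1 j
      _ = (Iᶜ.card : ℝ) * (2 * n / r) := by
          rw [← Finset.sum_mul]
          congr 1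
          have hfe : Finset.univ.filter (fun i : Fin n => i ∈ Iᶜ) = Iᶜ := by
            ext x; simp
          rw [← hfe, Finset.card_filter]
          push_cast
          refine Finset.sum_congr rfl fun i _ => ?_
          by_cases hi : i ∈ I <;> simp [hi]
      _ = m * (2 * n / r) := by rw [hm]
  -- main inequality
  have hmain : (γ - 2*ε) * l1Norm (X₀ - Xh) ≤ 8 * m * n / r := by
    have h1 : γ * T ≤ ε * (2*T) + m * (2*n/r) + m * (2*n/r) := by
      calc γ * T ≤ ∑ i, ∑ j, Kt i j * (X₀ i j - Xh i j) := hlow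
        _ ≤ ε * (2 * T) + (∑ i, ∑ j, (if i ∈ I then (0:ℝ) else 1) * |X₀ i j - Xh i j|)
            + (∑ i, ∑ j, (if j ∈ I then (0:ℝ) else 1) * |X₀ i j - Xh i j|) := hout
        _ ≤ ε * (2 * T) + m * (2*n/r) + m * (2*n/r) := by linarith
    rw [hl1]
    have : 8 * (m:ℝ) * n / r = 2 * (m * (2*n/r) + m * (2*n/r)) := by ring
    rw [this]
    linarith
  have hl1nonneg : 0 ≤ l1Norm (X₀ - Xh) := by
    unfold l1Norm
    exact Finset.sum_nonneg fun i _ => Finset.sum_nonneg fun j _ => abs_nonneg _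
  have hbound : l1Norm (X₀ - Xh) ≤ 8 * m * n / (r * (γ - 2 * ε)) := by
    rw [le_div_iff₀ (mul_pos hr0 hγ2)]
    have h2 : l1Norm (X₀ - Xh) * (r * (γ - 2*ε)) = r * ((γ - 2*ε) * l1Norm (X₀ - Xh)) := by
      ring
    rw [h2]
    calc (r:ℝ) * ((γ - 2*ε) * l1Norm (X₀ - Xh)) ≤ r * (8 * m * n / r) :=
          mul_le_mul_of_nonneg_left hmain hr0.le
      _ = 8 * m * n := by field_simp
  refine ⟨hbound, fun hm0 => ?_⟩
  have hzero : l1Norm (X₀ - Xh) = 0 := by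
    have : l1Norm (X₀ - Xh) ≤ 0 := by
      have := hbound
      rw [hm0] at this
      simpa using this
    linarith
  have hentry : ∀ i ∈ Finset.univ, ∑ j, |(X₀ - Xh) i j| = 0 := by
    rw [l1Norm] at hzero
    intro i hi
    exact (Finset.sum_eq_zero_iff_of_nonneg fun i _ =>
      Finset.sum_nonneg fun j _ => abs_nonneg _).mp hzero i hi
  ext i j
  have h3 := (Finset.sum_eq_zero_iff_of_nonneg fun j _ => abs_nonneg _).mp
    (hentry i (Finset.mem_univ i)) j (Finset.mem_univ j)
  have h4 : (X₀ - Xh) i j = 0 := abs_eq_zero.mp h3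
  rw [Matrix.sub_apply] at h4
  linarith
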